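/- Let X and ξ be independent [0,1]-valued random variables with ξ uniformly distributed on [0,1]. Define U = ξ·F(X) + (1−ξ)·F⁻(X), where F(x) = P(X ≤ x) and F⁻(x) = P(X < x). Then U is uniformly distributed on [0,1] and |U − X| ≤ sup_{0 ≤ t ≤ 1} |F(t) − t| almost surely. -/

import Mathlib

open MeasureTheory ProbabilityTheory

open scoped ENNReal

open Set in
private lemma stmt2_aux_int (μ : Measure ℝ) [IsProbabilityMeasure μ]
    (F Fm : ℝ → ℝ)
    (hF : ∀ x, F x = (μ (Iic x)).toReal)
    (hFm : ∀ x, Fm x = (μ (Iio x)).toReal)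
    (h1 : F 1 = 1) (h0 : Fm 0 = 0)
    {a : ℝ} (ha0 : 0 ≤ a) (ha1 : a < 1) :
    ∫⁻ x, (if a < Fm x then 0 else if F x ≤ a then 1
           else ENNReal.ofReal ((a - Fm x) / (F x - Fm x))) ∂μ = ENNReal.ofReal a := by
  have hIicR : ∀ x, ENNReal.ofReal (F x) = μ (Iic x) := fun x => by
    rw [hF]; exact ENNReal.ofReal_toReal (measure_ne_top μ _)
  have hIioR : ∀ x, ENNReal.ofReal (Fm x) = μ (Iio x) := fun x => by
    rw [hFm]; exact ENNReal.ofReal_toReal (measure_ne_top μ _)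
  have hF0 : ∀ x, 0 ≤ F x := fun x => by rw [hF]; exact ENNReal.toReal_nonneg
  have hFm0 : ∀ x, 0 ≤ Fm x := fun x => by rw [hFm]; exact ENNReal.toReal_nonneg
  have hFmF : ∀ x, Fm x ≤ F x := fun x => by
    rw [hF, hFm]; exact ENNReal.toReal_mono (measure_ne_top μ _) (measure_mono Iio_subset_Iic_self)
  have hFmono : Monotone F := fun x y hxy => by
    rw [hF, hF]
    exact ENNReal.toReal_mono (measure_ne_top μ _) (measure_mono (Iic_subset_Iic.2 hxy))
  have hFmmono : Monotone Fm := fun x y hxy => by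
    rw [hFm, hFm]
    exact ENNReal.toReal_mono (measure_ne_top μ _) (measure_mono (Iio_subset_Iio hxy))
  have hFmeas : Measurable F := hFmono.measurable
  have hFmmeas : Measurable Fm := hFmmono.measurable
  set S : Set ℝ := {x | a ≤ F x} ∩ Ici 0 with hS
  have hne : S.Nonempty := ⟨1, by simp [hS, h1, ha1.le], by norm_num⟩
  have hbdd : BddBelow S := ⟨0, fun x hx => hx.2⟩
  set q : ℝ := sInf S with hq
  -- for x < q, F x ≤ a
  have hxq : ∀ x, x < q → F x ≤ a := by
    intro x hx
    rcases lt_or_ge x 0 with hx0 | hx0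
    · have : F x ≤ Fm 0 := by
        rw [hF, hFm]
        exact ENNReal.toReal_mono (measure_ne_top μ _)
          (measure_mono (fun y hy => lt_of_le_of_lt hy hx0))
      linarith [h0 ▸ this]
    · have hxS : x ∉ S := notMem_of_lt_csInf hx hbdd
      by_contra hcon
      exact hxS ⟨le_of_not_ge hcon, hx0⟩
  -- right continuity: a ≤ F q
  have haq : a ≤ F q := by
    have hIic : μ (Iic q) = ⨅ n : ℕ, μ (Iic (q + 1/(n+1))) := by
      have h : Iic q = ⋂ n : ℕ, Iic (q + 1/(n+1)) := by
        ext y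
        simp only [mem_Iic, mem_iInter]
        constructor
        · intro hy n; have : (0:ℝ) < 1/(n+1) := by positivity
          linarith
        · intro h
          by_contra hy
          push_neg at hy
          obtain ⟨n, hn⟩ := exists_nat_one_div_lt (show (0:ℝ) < y - q by linarith)
          have := h n; linarith
      rw [h]
      refine Directed.measure_iInter (fun n => measurableSet_Iic.nullMeasurableSet) ?_
        ⟨0, measure_ne_top _ _⟩
      intro m n
      have hle : ∀ k l : ℕ, k ≤ l → (1:ℝ)/(l+1) ≤ 1/(k+1) := by
        intro k l hkl
        apply one_div_le_one_div_of_le (by positivity)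
        have : (k:ℝ) ≤ l := Nat.cast_le.2 hkl
        linarith
      exact ⟨max m n, Iic_subset_Iic.2 (by linarith [hle m (max m n) (le_max_left m n)]),
        Iic_subset_Iic.2 (by linarith [hle n (max m n) (le_max_right m n)])⟩
    have key : ENNReal.ofReal a ≤ μ (Iic q) := by
      rw [hIic]
      refine le_iInf fun n => ?_
      have hpos : (0:ℝ) < 1/(n+1) := by positivity
      obtain ⟨x, hxS, hxlt⟩ := exists_lt_of_csInf_lt hne (show q < q + 1/(n+1) by linarith)
      calc ENNReal.ofReal a ≤ ENNReal.ofReal (F x) := ENNReal.ofReal_le_ofReal hxS.1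
        _ = μ (Iic x) := hIicR x
        _ ≤ μ (Iic (q + 1/(n+1))) := measure_mono (Iic_subset_Iic.2 hxlt.le)
    rw [← hIicR q] at key
    exact (ENNReal.ofReal_le_ofReal_iff (hF0 q)).mp key
  -- left limit: Fm q ≤ a
  have hFmq : Fm q ≤ a := by
    have hIio : μ (Iio q) = ⨆ n : ℕ, μ (Iic (q - 1/(n+1))) := by
      have h : Iio q = ⋃ n : ℕ, Iic (q - 1/(n+1)) := by
        ext y
        simp only [mem_Iio, mem_iUnion, mem_Iic]
        constructor
        · intro hy
          obtain ⟨n, hn⟩ := exists_nat_one_div_lt (show (0:ℝ) < q - y by linarith)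
          exact ⟨n, by linarith⟩
        · rintro ⟨n, hn⟩; have : (0:ℝ) < 1/(n+1) := by positivity
          linarith
      rw [h]
      refine Monotone.measure_iUnion fun m n hmn => Iic_subset_Iic.2 ?_
      have h1 : (1:ℝ)/(n+1) ≤ 1/(m+1) := by
        apply one_div_le_one_div_of_le (by positivity)
        have : (m:ℝ) ≤ n := Nat.cast_le.2 hmn
        linarith
      linarith
    have key : μ (Iio q) ≤ ENNReal.ofReal a := by
      rw [hIio]
      refine iSup_le fun n => ?_
      have hpos : (0:ℝ) < 1/(n+1) := by positivity
      rw [← hIicR]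
      exact ENNReal.ofReal_le_ofReal (hxq _ (by linarith))
    rw [← hIioR q] at key
    have := (ENNReal.ofReal_le_ofReal_iff ha0).mp key
    exact this
  -- null pieces
  have hNull : ∀ x, q < x → F x ≤ a → μ (Ioc q x) = 0 := by
    intro x hqx hFx
    have hsum : μ (Iic q) + μ (Ioc q x) = μ (Iic x) := by
      rw [← measure_union (Iic_disjoint_Ioc le_rfl) measurableSet_Ioc,
        Iic_union_Ioc_eq_Iic hqx.le]
    have hle : μ (Iic x) ≤ μ (Iic q) := by
      rw [← hIicR, ← hIicR]
      exact ENNReal.ofReal_le_ofReal (hFx.trans haq)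
    have : μ (Iic q) + μ (Ioc q x) ≤ μ (Iic q) + 0 := by
      rw [add_zero, hsum]; exact hle
    exact le_antisymm ((ENNReal.add_le_add_iff_left (measure_ne_top μ _)).mp this) (zero_le)
  set N : Set ℝ := {x | q < x ∧ F x ≤ a} with hNdef
  have hNmeas : MeasurableSet N := by
    have h : N = Ioi q ∩ F ⁻¹' Iic a := by ext x; simp [hNdef, mem_Ioi, mem_Iic]
    rw [h]; exact measurableSet_Ioi.inter (hFmeas measurableSet_Iic)
  have hNnull : μ N = 0 := by
    rcases N.eq_empty_or_nonempty with hN | hN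
    · simp [hN]
    have hbddN : BddAbove N := by
      refine ⟨1, fun x hx => ?_⟩
      by_contra hx1
      push_neg at hx1
      have := hFmono hx1.le
      rw [h1] at this
      linarith [hx.2]
    set t : ℝ := sSup N with ht
    have hIoo : μ (Ioo q t) = 0 := by
      have hcover : Ioo q t ⊆ ⋃ n : ℕ, Ioc q (t - 1/(n+1)) := by
        intro y hy
        obtain ⟨n, hn⟩ := exists_nat_one_div_lt (show (0:ℝ) < t - y from by linarith [hy.2])
        exact mem_iUnion.2 ⟨n, hy.1, by linarith⟩
      refine measure_mono_null hcover (measure_iUnion_null fun n => ?_)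
      rcases le_or_gt (t - 1/(n+1)) q with hle | hlt
      · rw [Ioc_eq_empty (not_lt.2 hle), measure_empty]
      · have hpos : (0:ℝ) < 1/(n+1) := by positivity
        obtain ⟨x, hxN, hxlt⟩ := exists_lt_of_lt_csSup hN (show t - 1/(n+1) < t by linarith)
        exact measure_mono_null (Ioc_subset_Ioc_right hxlt.le) (hNull x hxN.1 hxN.2)
    by_cases htN : t ∈ N
    · exact measure_mono_null (show N ⊆ Ioc q t from fun x hx => ⟨hx.1, le_csSup hbddN hx⟩) (hNull t htN.1 htN.2)
    · refine measure_mono_null (fun x hx => ?_) hIoo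
      have hxt : x ≤ t := le_csSup hbddN hx
      exact ⟨hx.1, lt_of_le_of_ne hxt (fun h => htN (h ▸ hx))⟩
  
  set f : ℝ → ℝ≥0∞ := fun x => if a < Fm x then 0 else if F x ≤ a then 1
      else ENNReal.ofReal ((a - Fm x) / (F x - Fm x)) with hfdef
  have hIio1 : ∫⁻ x in Iio q, f x ∂μ = μ (Iio q) := by
    have hgeq : ∀ x ∈ Iio q, f x = 1 := by
      intro x hx
      have h1 := hxq x hx
      have h2 := hFmF x
      rw [hfdef]
      simp only
      rw [if_neg (not_lt.2 (h2.trans h1)), if_pos h1]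
    calc ∫⁻ x in Iio q, f x ∂μ = ∫⁻ _ in Iio q, 1 ∂μ :=
        setLIntegral_congr_fun measurableSet_Iio hgeq
      _ = μ (Iio q) := setLIntegral_one _
  have hIoi0 : ∫⁻ x in Ioi q, f x ∂μ = 0 := by
    refine le_antisymm ?_ (zero_le)
    have hbound : ∀ x ∈ Ioi q, f x ≤ N.indicator 1 x := by
      intro x hx
      by_cases hfx : F x ≤ a
      · have hxN : x ∈ N := ⟨hx, hfx⟩
        rw [indicator_of_mem hxN]
        rw [hfdef]
        simp only
        split_ifs <;> simp
      · have hFmx : a ≤ Fm x := by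
          have hsub : μ (Iic q) ≤ μ (Iio x) :=
            measure_mono (fun y hy => show y < x from lt_of_le_of_lt hy hx)
          have h2 : F q ≤ Fm x := by
            rw [hF, hFm]; exact ENNReal.toReal_mono (measure_ne_top μ _) hsub
          linarith
        have hz : f x = 0 := by
          rcases lt_or_eq_of_le hFmx with hlt | heq
          · rw [hfdef]; simp only; rw [if_pos hlt]
          · rw [hfdef]; simp only
            rw [if_neg (by rw [← heq]; exact lt_irrefl a), if_neg hfx, ← heq, sub_self,
              zero_div, ENNReal.ofReal_zero]
        simp [hz]
    calc ∫⁻ x in Ioi q, f x ∂μ ≤ ∫⁻ x in Ioi q, N.indicator 1 x ∂μ :=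
        setLIntegral_mono (measurable_one.indicator hNmeas) hbound
      _ = μ.restrict (Ioi q) N := lintegral_indicator_one hNmeas
      _ = μ (N ∩ Ioi q) := Measure.restrict_apply hNmeas
      _ ≤ μ N := measure_mono inter_subset_left
      _ = 0 := hNnull
  have hsplit : ∫⁻ x, f x ∂μ = μ (Iio q) + f q * μ {q} := by
    have h1 : ∫⁻ x, f x ∂μ = ∫⁻ x in Iic q, f x ∂μ + ∫⁻ x in Ioi q, f x ∂μ := by
      rw [← lintegral_add_compl f (measurableSet_Iic : MeasurableSet (Iic q)), compl_Iic]
    have h2 : ∫⁻ x in Iic q, f x ∂μ = ∫⁻ x in Iio q, f x ∂μ + ∫⁻ x in {q}, f x ∂μ := by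
      rw [← Iio_union_right (a := q)]
      exact lintegral_union (measurableSet_singleton q) (by simp)
    rw [h1, h2, hIio1, hIoi0, add_zero, lintegral_singleton]
  rw [hsplit]
  by_cases hqa : F q ≤ a
  · have hfq : f q = 1 := by
      rw [hfdef]; simp only
      rw [if_neg (not_lt.2 ((hFmF q).trans hqa)), if_pos hqa]
    rw [hfq, one_mul,
      ← measure_union (by simp : Disjoint (Iio q) {q}) (measurableSet_singleton q),
      Iio_union_right, ← hIicR q, le_antisymm hqa haq]
  · push_neg at hqa
    have hd : 0 < F q - Fm q := by linarith
    have hfq : f q = ENNReal.ofReal ((a - Fm q) / (F q - Fm q)) := by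
      rw [hfdef]; simp only
      rw [if_neg (not_lt.2 hFmq), if_neg (not_le.2 hqa)]
    have hsing : μ {q} = ENNReal.ofReal (F q - Fm q) := by
      have hset : ({q} : Set ℝ) = Iic q \ Iio q := by
        ext y; simp [le_antisymm_iff]
      rw [hset, measure_diff Iio_subset_Iic_self measurableSet_Iio.nullMeasurableSet
        (measure_ne_top μ _), ← hIicR, ← hIioR, ← ENNReal.ofReal_sub _ (hFm0 q)]
    rw [hfq, hsing, ← ENNReal.ofReal_mul (div_nonneg (by linarith) hd.le),
      div_mul_cancel₀ _ hd.ne', ← hIioR, ← ENNReal.ofReal_add (hFm0 q) (by linarith),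
      show Fm q + (a - Fm q) = a from by ring]

open Set in
private lemma stmt2_map_eq (μ : Measure ℝ) [IsProbabilityMeasure μ]
    (F Fm : ℝ → ℝ)
    (hF : ∀ x, F x = (μ (Iic x)).toReal)
    (hFm : ∀ x, Fm x = (μ (Iio x)).toReal)
    (h1 : F 1 = 1) (h0 : Fm 0 = 0) :
    Measure.map (fun p : ℝ × ℝ => p.2 * F p.1 + (1 - p.2) * Fm p.1)
      (μ.prod (volume.restrict (Icc (0:ℝ) 1))) = volume.restrict (Icc (0:ℝ) 1) := by
  set ν : Measure ℝ := volume.restrict (Icc (0:ℝ) 1) with hν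
  have hνprob : IsProbabilityMeasure ν := ⟨by
    rw [hν, Measure.restrict_apply_univ, Real.volume_Icc]; norm_num⟩
  have hF0 : ∀ x, 0 ≤ F x := fun x => by rw [hF]; exact ENNReal.toReal_nonneg
  have hFm0 : ∀ x, 0 ≤ Fm x := fun x => by rw [hFm]; exact ENNReal.toReal_nonneg
  have hFmF : ∀ x, Fm x ≤ F x := fun x => by
    rw [hF, hFm]; exact ENNReal.toReal_mono (measure_ne_top μ _) (measure_mono Iio_subset_Iic_self)
  have hFle1 : ∀ x, F x ≤ 1 := fun x => by
    rw [hF]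
    have := prob_le_one (μ := μ) (s := Iic x)
    calc (μ (Iic x)).toReal ≤ (1 : ℝ≥0∞).toReal := ENNReal.toReal_mono ENNReal.one_ne_top this
      _ = 1 := by simp
  have hFmono : Monotone F := fun x y hxy => by
    rw [hF, hF]
    exact ENNReal.toReal_mono (measure_ne_top μ _) (measure_mono (Iic_subset_Iic.2 hxy))
  have hFmmono : Monotone Fm := fun x y hxy => by
    rw [hFm, hFm]
    exact ENNReal.toReal_mono (measure_ne_top μ _) (measure_mono (Iio_subset_Iio hxy))
  have hFmeas : Measurable F := hFmono.measurable
  have hFmmeas : Measurable Fm := hFmmono.measurable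
  set g : ℝ × ℝ → ℝ := fun p => p.2 * F p.1 + (1 - p.2) * Fm p.1 with hg
  have hgmeas : Measurable g :=
    (measurable_snd.mul (hFmeas.comp measurable_fst)).add
      ((measurable_const.sub measurable_snd).mul (hFmmeas.comp measurable_fst))
  have : IsProbabilityMeasure (Measure.map g (μ.prod ν)) :=
    Measure.isProbabilityMeasure_map hgmeas.aemeasurable
  refine Measure.ext_of_Iic _ _ fun b => ?_
  rw [Measure.map_apply hgmeas measurableSet_Iic,
    Measure.prod_apply (hgmeas measurableSet_Iic)]
  have hinner : ∀ x : ℝ, ν (Prod.mk x ⁻¹' (g ⁻¹' Iic b)) =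
      (if b < Fm x then 0 else if F x ≤ b then 1
        else ENNReal.ofReal ((b - Fm x) / (F x - Fm x))) := by
    intro x
    have hpre : Prod.mk x ⁻¹' (g ⁻¹' Iic b) = {s : ℝ | s * F x + (1 - s) * Fm x ≤ b} := rfl
    rw [hpre, hν, Measure.restrict_apply' measurableSet_Icc]
    by_cases hb1 : b < Fm x
    · have hempty : {s : ℝ | s * F x + (1 - s) * Fm x ≤ b} ∩ Icc 0 1 = ∅ := by
        rw [eq_empty_iff_forall_notMem]
        rintro s ⟨hsS, hs0, hs1⟩
        have := hFmF x
        simp only [mem_setOf_eq] at hsS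
        nlinarith
      rw [if_pos hb1, hempty, measure_empty]
    · rw [if_neg hb1]
      push_neg at hb1
      by_cases hb2 : F x ≤ b
      · have hfull : {s : ℝ | s * F x + (1 - s) * Fm x ≤ b} ∩ Icc 0 1 = Icc 0 1 := by
          refine inter_eq_right.2 fun s hs => ?_
          simp only [mem_setOf_eq]
          have := hFmF x
          rcases hs with ⟨hs0, hs1⟩
          nlinarith
        rw [if_pos hb2, hfull, Real.volume_Icc]
        norm_num
      · push_neg at hb2
        have hd : 0 < F x - Fm x := by linarith
        have hicc : {s : ℝ | s * F x + (1 - s) * Fm x ≤ b} ∩ Icc 0 1 =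
            Icc 0 ((b - Fm x) / (F x - Fm x)) := by
          ext s
          simp only [mem_inter_iff, mem_setOf_eq, mem_Icc]
          constructor
          · rintro ⟨hsS, hs0, hs1⟩
            refine ⟨hs0, ?_⟩
            rw [le_div_iff₀ hd]
            nlinarith
          · rintro ⟨hs0, hsc⟩
            have hsFm : s * (F x - Fm x) ≤ b - Fm x := by
              rw [← le_div_iff₀ hd]; exact hsc
            have hc1 : (b - Fm x) / (F x - Fm x) < 1 := (div_lt_one hd).2 (by linarith)
            exact ⟨by nlinarith, hs0, by linarith⟩
        rw [if_neg (not_le.2 hb2), hicc, Real.volume_Icc, sub_zero]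
  rw [lintegral_congr hinner]
  rw [hν, Measure.restrict_apply' measurableSet_Icc]
  rcases lt_or_ge b 0 with hb | hb0
  · have hz : ∀ x : ℝ, (if b < Fm x then (0:ℝ≥0∞) else if F x ≤ b then 1
        else ENNReal.ofReal ((b - Fm x) / (F x - Fm x))) = 0 := fun x =>
      if_pos (lt_of_lt_of_le hb (hFm0 x))
    rw [lintegral_congr hz, lintegral_zero]
    have : Iic b ∩ Icc (0:ℝ) 1 = ∅ := by
      rw [eq_empty_iff_forall_notMem]
      rintro s ⟨hs1, hs2, _⟩
      simp only [mem_Iic] at hs1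
      linarith
    rw [this, measure_empty]
  rcases lt_or_ge b 1 with hb1 | hb1
  · rw [stmt2_aux_int μ F Fm hF hFm h1 h0 hb0 hb1]
    have : Iic b ∩ Icc (0:ℝ) 1 = Icc 0 b := by
      ext s
      simp only [mem_inter_iff, mem_Iic, mem_Icc]
      constructor
      · rintro ⟨h1, h2, h3⟩; exact ⟨h2, h1⟩
      · rintro ⟨h2, h1⟩; exact ⟨h1, h2, by linarith⟩
    rw [this, Real.volume_Icc, sub_zero]
  · have hone : ∀ x : ℝ, (if b < Fm x then (0:ℝ≥0∞) else if F x ≤ b then 1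
        else ENNReal.ofReal ((b - Fm x) / (F x - Fm x))) = 1 := by
      intro x
      have h2 : F x ≤ b := (hFle1 x).trans hb1
      rw [if_neg (not_lt.2 (by linarith [hFmF x, hFm0 x] : Fm x ≤ b)), if_pos h2]
    rw [lintegral_congr hone, lintegral_one, measure_univ]
    have : Iic b ∩ Icc (0:ℝ) 1 = Icc 0 1 :=
      inter_eq_right.2 fun s hs => le_trans hs.2 hb1
    rw [this, Real.volume_Icc]
    norm_num

/-- If `X` and `ξ` are independent `[0,1]`-valued random variables
with `ξ` uniform on `[0,1]`, then `U = ξ·F(X) + (1−ξ)·F⁻(X)` is uniformly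
distributed on `[0,1]` and `|U − X| ≤ sup_{0≤t≤1} |F(t) − t|` (surely). -/
theorem stmt2
    {Ω : Type*} [MeasurableSpace Ω] (P : Measure Ω) [IsProbabilityMeasure P]
    (X ξ : Ω → ℝ) (hX : Measurable X) (hξ : Measurable ξ)
    (hXrange : ∀ ω, X ω ∈ Set.Icc (0:ℝ) 1) (hξrange : ∀ ω, ξ ω ∈ Set.Icc (0:ℝ) 1)
    (hindep : IndepFun X ξ P)
    (hunif : Measure.map ξ P = volume.restrict (Set.Icc (0:ℝ) 1))
    (F Fm : ℝ → ℝ)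
    (hF : ∀ x, F x = (P {ω | X ω ≤ x}).toReal)
    (hFm : ∀ x, Fm x = (P {ω | X ω < x}).toReal)
    (U : Ω → ℝ)
    (hU : ∀ ω, U ω = ξ ω * F (X ω) + (1 - ξ ω) * Fm (X ω)) :
    Measure.map U P = volume.restrict (Set.Icc (0:ℝ) 1) ∧
      ∀ ω, |U ω - X ω| ≤ ⨆ t : Set.Icc (0:ℝ) 1, |F t - (t : ℝ)| := by
  
  have hFnn : ∀ x, 0 ≤ F x := fun x => by rw [hF]; exact ENNReal.toReal_nonneg
  have hFmnn : ∀ x, 0 ≤ Fm x := fun x => by rw [hFm]; exact ENNReal.toReal_nonneg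
  have hFmF : ∀ x, Fm x ≤ F x := fun x => by
    rw [hF, hFm]
    exact ENNReal.toReal_mono (measure_ne_top P _)
      (measure_mono fun ω (h : X ω < _) => (le_of_lt h : X ω ≤ _))
  have hFle1 : ∀ x, F x ≤ 1 := fun x => by
    rw [hF]
    calc (P {ω | X ω ≤ x}).toReal ≤ (1 : ℝ≥0∞).toReal :=
      ENNReal.toReal_mono ENNReal.one_ne_top prob_le_one
      _ = 1 := by simp
  constructor
  · -- uniformity
    set μ : Measure ℝ := Measure.map X P with hμ
    have hμprob : IsProbabilityMeasure μ := Measure.isProbabilityMeasure_map hX.aemeasurable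
    have hFeq : ∀ x, F x = (μ (Set.Iic x)).toReal := fun x => by
      rw [hF, hμ, Measure.map_apply hX measurableSet_Iic]
      rfl
    have hFmeq : ∀ x, Fm x = (μ (Set.Iio x)).toReal := fun x => by
      rw [hFm, hμ, Measure.map_apply hX measurableSet_Iio]
      rfl
    have h1 : F 1 = 1 := by
      rw [hF]
      have huniv : {ω | X ω ≤ 1} = Set.univ := Set.eq_univ_of_forall fun ω => (hXrange ω).2
      rw [huniv, measure_univ]
      simp
    have h0 : Fm 0 = 0 := by
      rw [hFm]
      have hempty : {ω | X ω < 0} = ∅ := by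
        rw [Set.eq_empty_iff_forall_notMem]
        exact fun ω h => absurd (hXrange ω).1 (not_le.2 h)
      rw [hempty, measure_empty]
      simp
    have hFmono : Monotone F := fun x y hxy => by
      rw [hFeq, hFeq]
      exact ENNReal.toReal_mono (measure_ne_top μ _) (measure_mono (Set.Iic_subset_Iic.2 hxy))
    have hFmmono : Monotone Fm := fun x y hxy => by
      rw [hFmeq, hFmeq]
      exact ENNReal.toReal_mono (measure_ne_top μ _) (measure_mono (Set.Iio_subset_Iio hxy))
    have hgmeas : Measurable (fun p : ℝ × ℝ => p.2 * F p.1 + (1 - p.2) * Fm p.1) :=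
      (measurable_snd.mul (hFmono.measurable.comp measurable_fst)).add
        ((measurable_const.sub measurable_snd).mul (hFmmono.measurable.comp measurable_fst))
    have hpair : Measure.map (fun ω => (X ω, ξ ω)) P = μ.prod (volume.restrict (Set.Icc 0 1)) := by
      rw [← hunif]
      exact (indepFun_iff_map_prod_eq_prod_map_map hX.aemeasurable hξ.aemeasurable).mp hindep
    have hcomp : U = (fun p : ℝ × ℝ => p.2 * F p.1 + (1 - p.2) * Fm p.1) ∘
        (fun ω => (X ω, ξ ω)) := funext fun ω => by simp [hU ω]
    rw [hcomp, ← Measure.map_map hgmeas (hX.prodMk hξ), hpair,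
      stmt2_map_eq μ F Fm hFeq hFmeq h1 h0]
  · -- the bound
    intro ω
    set M := ⨆ t : Set.Icc (0:ℝ) 1, |F t - (t : ℝ)| with hM
    have hbddM : BddAbove (Set.range fun t : Set.Icc (0:ℝ) 1 => |F t - (t : ℝ)|) := by
      refine ⟨1, ?_⟩
      rintro _ ⟨t, rfl⟩
      have h1 := hFnn t
      have h2 := hFle1 t
      have h3 := t.2.1
      have h4 := t.2.2
      rw [abs_le]
      constructor <;> linarith
    have hle : ∀ t : Set.Icc (0:ℝ) 1, |F t - (t : ℝ)| ≤ M := fun t => le_ciSup hbddM t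
    have hM0 : 0 ≤ M :=
      le_trans (abs_nonneg _) (hle ⟨0, by norm_num⟩)
    set x := X ω with hx
    set s := ξ ω with hs
    have hxm := hXrange ω
    have hsm := hξrange ω
    have hUx : U ω = s * F x + (1 - s) * Fm x := hU ω
    have hU1 : U ω ≤ F x := by
      rw [hUx]
      nlinarith [hsm.1, hsm.2, hFmF x]
    have hU2 : Fm x ≤ U ω := by
      rw [hUx]
      nlinarith [hsm.1, hsm.2, hFmF x]
    have hup : F x - x ≤ M :=
      le_trans (le_abs_self _) (hle ⟨x, hxm⟩)
    have hdown : x - Fm x ≤ M := by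
      rcases eq_or_lt_of_le hxm.1 with h0x | h0x
      · have hx0 : x = 0 := by rw [hx, ← h0x]
        linarith [hFmnn x]
      · refine le_of_forall_pos_le_add fun ε hε => ?_
        set δ := min ε x with hδ
        have hδ0 : 0 < δ := lt_min hε h0x
        have hδx : δ ≤ x := min_le_right _ _
        have hδε : δ ≤ ε := min_le_left _ _
        have hsub : F (x - δ) ≤ Fm x := by
          rw [hF, hFm]
          exact ENNReal.toReal_mono (measure_ne_top P _)
            (measure_mono fun ω' (h : X ω' ≤ x - δ) => show X ω' < x by linarith)
        have hmem : (x - δ) ∈ Set.Icc (0:ℝ) 1 := ⟨by linarith, by linarith [hxm.2]⟩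
        have habs : (x - δ) - F (x - δ) ≤ M := by
          have := hle ⟨x - δ, hmem⟩
          simp only at this
          have h2 : (x - δ) - F (x - δ) ≤ |F (x - δ) - (x - δ)| := by
            rw [abs_sub_comm]
            exact le_abs_self _
          linarith
        linarith
    rw [abs_le]
    constructor <;> linarith
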